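/- Let k ≥ 2 be a squarefree integer. If F is a k-town family of vectors in (ℤ/kℤ)^n, then |F| ≤ k^{⌊n/2⌋}. -/

import Mathlib

open Module

private def dotB (K : Type*) [Field K] (n : ℕ) :
    LinearMap.BilinForm K (Fin n → K) :=
  LinearMap.mk₂ K (fun v w => ∑ r, v r * w r)
    (fun v v' w => by simp [add_mul, Finset.sum_add_distrib])
    (fun c v w => by simp [Finset.mul_sum, mul_assoc])
    (fun v w w' => by simp [mul_add, Finset.sum_add_distrib])
    (fun c v w => by simp [Finset.mul_sum, mul_left_comm])

private lemma dotB_apply {K : Type*} [Field K] {n : ℕ} (v w : Fin n → K) :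
    dotB K n v w = ∑ r, v r * w r := rfl

/-- The field case: a self-orthogonal family over `ZMod p` has size at most `p^(n/2)`. -/
private lemma field_case (p : ℕ) [hp : Fact p.Prime] {n : ℕ}
    (F : Finset (Fin n → ZMod p))
    (hF : ∀ f₁ ∈ F, ∀ f₂ ∈ F, ∑ r, f₁ r * f₂ r = 0) :
    F.card ≤ p ^ (n / 2) := by
  set B : LinearMap.BilinForm (ZMod p) (Fin n → ZMod p) := dotB (ZMod p) n with hB
  have hrefl : B.IsRefl := by
    intro v w h
    rw [dotB_apply] at h ⊢
    rw [← h]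
    exact Finset.sum_congr rfl fun r _ => mul_comm _ _
  have hnd : B.Nondegenerate := by
    refine (LinearMap.IsRefl.nondegenerate_iff_separatingLeft hrefl).mpr ?_
    intro v hv
    funext r
    have := hv (Pi.single r 1)
    rw [dotB_apply] at this
    simpa [Pi.single_apply, mul_ite, Finset.sum_ite_eq'] using this
  set W := Submodule.span (ZMod p) (F : Set (Fin n → ZMod p)) with hW
  have h1 : ∀ y ∈ F, W ≤ LinearMap.ker (B y) := by
    intro y hy
    rw [hW, Submodule.span_le]
    intro f hf
    simp only [SetLike.mem_coe, LinearMap.mem_ker]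
    rw [dotB_apply]
    exact hF y hy f hf
  have h2 : ∀ x ∈ W, W ≤ LinearMap.ker (B.flip x) := by
    intro x hx
    rw [hW, Submodule.span_le]
    intro f hf
    simp only [SetLike.mem_coe, LinearMap.mem_ker, LinearMap.flip_apply]
    exact h1 f hf hx
  have hWort : W ≤ B.orthogonal W := by
    intro x hx
    rw [LinearMap.BilinForm.mem_orthogonal_iff]
    intro y hy
    exact h2 x hx hy
  have hdim : finrank (ZMod p) W ≤ n / 2 := by
    have h3 : finrank (ZMod p) W ≤ finrank (ZMod p) (B.orthogonal W) := Submodule.finrank_mono hWort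
    rw [LinearMap.BilinForm.finrank_orthogonal hnd W] at h3
    have h4 : finrank (ZMod p) (Fin n → ZMod p) = n := Module.finrank_fin_fun (ZMod p)
    have h5 : finrank (ZMod p) W ≤ finrank (ZMod p) (Fin n → ZMod p) := Submodule.finrank_le W
    omega
  classical
  haveI : Fintype W := Fintype.ofFinite _
  have hcard : F.card ≤ Fintype.card W := by
    have : Fintype.card F ≤ Fintype.card W := by
      apply Fintype.card_le_of_injective
        (fun f => (⟨f.1, Submodule.subset_span f.2⟩ : W))
      intro a b h
      have : (a : Fin n → ZMod p) = b := by
        exact congrArg (fun x : W => (x : Fin n → ZMod p)) h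
      exact Subtype.ext this
    simpa using this
  have hcardW : Fintype.card W = p ^ finrank (ZMod p) W := by
    rw [card_eq_pow_finrank (K := ZMod p) (V := W), ZMod.card]
  calc F.card ≤ Fintype.card W := hcard
    _ = p ^ finrank (ZMod p) W := hcardW
    _ ≤ p ^ (n / 2) := Nat.pow_le_pow_right hp.out.pos hdim

private lemma cast_zero_of_both {k p m : ℕ} (hp : p ∣ k) (hm : m ∣ k)
    (hcop : Nat.Coprime p m) (hkdvd : k ∣ p * m) [NeZero k] (x : ZMod k)
    (h1 : ZMod.castHom hp (ZMod p) x = 0)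
    (h2 : ZMod.castHom hm (ZMod m) x = 0) :
    x = 0 := by
  have hx : ((x.val : ℕ) : ZMod k) = x := ZMod.natCast_zmod_val x
  rw [← hx] at h1 h2
  rw [map_natCast] at h1 h2
  rw [ZMod.natCast_eq_zero_iff] at h1 h2
  have hpm : p * m ∣ x.val := Nat.Coprime.mul_dvd_of_dvd_of_dvd hcop h1 h2
  have : k ∣ x.val := dvd_trans hkdvd hpm
  rw [← hx, ZMod.natCast_eq_zero_iff]
  exact this

/-- Main auxiliary lemma, by strong induction on `k`. -/
private lemma main_aux : ∀ k : ℕ, Squarefree k → ∀ n : ℕ,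
    ∀ F : Finset (Fin n → ZMod k),
    (∀ f₁ ∈ F, ∀ f₂ ∈ F, ∑ r, f₁ r * f₂ r = 0) → F.card ≤ k ^ (n / 2) := by
  intro k
  induction k using Nat.strong_induction_on with
  | _ k ih =>
    intro hsf n F hF
    rcases Nat.lt_or_ge k 2 with hk2 | hk2
    · interval_cases k
      · exact absurd hsf not_squarefree_zero
      · -- k = 1 : ZMod 1 is a subsingleton
        have : F.card ≤ Fintype.card (Fin n → ZMod 1) := Finset.card_le_univ F
        simpa using this
    · by_cases hkp : k.Prime
      · haveI : Fact k.Prime := ⟨hkp⟩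
        exact field_case k F hF
      · -- k composite: split k = p * m with p = minFac k
        classical
        set p := k.minFac with hpdef
        have hkne1 : k ≠ 1 := by omega
        have hp : p.Prime := Nat.minFac_prime hkne1
        set m := k / p with hmdef
        have hpk : p ∣ k := Nat.minFac_dvd k
        have hkpm : k = p * m := (Nat.mul_div_cancel' hpk).symm
        have hkne0 : k ≠ 0 := by omega
        have hm0 : m ≠ 0 := by
          intro h; rw [h, mul_zero] at hkpm; exact hkne0 hkpm
        have hm1 : m ≠ 1 := by
          intro h; rw [h, mul_one] at hkpm; exact hkp (hkpm ▸ hp)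
        have hpm_ndvd : ¬ p ∣ m := by
          intro hdvd
          have : p * p ∣ k := hkpm ▸ mul_dvd_mul_left p hdvd
          exact hp.not_isUnit (hsf p this)
        have hcop : Nat.Coprime p m := (Nat.Prime.coprime_iff_not_dvd hp).mpr hpm_ndvd
        have hplt : p < k := by
          rcases Nat.lt_or_ge p k with h | h
          · exact h
          · exfalso
            have : p ≤ k := Nat.le_of_dvd (by omega) hpk
            have hpk' : p = k := le_antisymm this h
            exact hkp (hpk' ▸ hp)
        have hmlt : m < k := by
          have h2p : 2 ≤ p := hp.two_le
          have : m ∣ k := Dvd.intro_left p hkpm.symm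
          have hle : m ≤ k := Nat.le_of_dvd (by omega) this
          rcases lt_or_eq_of_le hle with h | h
          · exact h
          · exfalso
            have : p * m = 1 * m := by rw [← hkpm, h, one_mul]
            have := Nat.eq_of_mul_eq_mul_right (Nat.pos_of_ne_zero hm0) this
            omega
        haveI : NeZero k := ⟨hkne0⟩
        have hpdvd : p ∣ k := hpk
        have hmdvd : m ∣ k := Dvd.intro_left p hkpm.symm
        set π₁ : (Fin n → ZMod k) → (Fin n → ZMod p) :=
          fun f r => ZMod.castHom hpdvd (ZMod p) (f r) with hπ₁
        set π₂ : (Fin n → ZMod k) → (Fin n → ZMod m) :=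
          fun f r => ZMod.castHom hmdvd (ZMod m) (f r) with hπ₂
        set G₁ := F.image π₁ with hG₁
        set G₂ := F.image π₂ with hG₂
        have hG₁ort : ∀ g₁ ∈ G₁, ∀ g₂ ∈ G₁, ∑ r, g₁ r * g₂ r = 0 := by
          intro g₁ hg₁ g₂ hg₂
          obtain ⟨f₁, hf₁, rfl⟩ := Finset.mem_image.mp hg₁
          obtain ⟨f₂, hf₂, rfl⟩ := Finset.mem_image.mp hg₂
          have : (ZMod.castHom hpdvd (ZMod p)) (∑ r, f₁ r * f₂ r) = 0 := by
            rw [hF f₁ hf₁ f₂ hf₂]; exact map_zero _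
          rw [map_sum] at this
          simp only [map_mul] at this
          simpa [hπ₁] using this
        have hG₂ort : ∀ g₁ ∈ G₂, ∀ g₂ ∈ G₂, ∑ r, g₁ r * g₂ r = 0 := by
          intro g₁ hg₁ g₂ hg₂
          obtain ⟨f₁, hf₁, rfl⟩ := Finset.mem_image.mp hg₁
          obtain ⟨f₂, hf₂, rfl⟩ := Finset.mem_image.mp hg₂
          have : (ZMod.castHom hmdvd (ZMod m)) (∑ r, f₁ r * f₂ r) = 0 := by
            rw [hF f₁ hf₁ f₂ hf₂]; exact map_zero _
          rw [map_sum] at this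
          simp only [map_mul] at this
          simpa [hπ₂] using this
        have hinj : Set.InjOn (fun f => (π₁ f, π₂ f)) F := by
          intro f hf g hg h
          simp only [Prod.mk.injEq] at h
          funext r
          have h1 : ZMod.castHom hpdvd (ZMod p) (f r - g r) = 0 := by
            rw [map_sub, sub_eq_zero]
            exact congrFun h.1 r
          have h2 : ZMod.castHom hmdvd (ZMod m) (f r - g r) = 0 := by
            rw [map_sub, sub_eq_zero]
            exact congrFun h.2 r
          have := cast_zero_of_both hpdvd hmdvd hcop (dvd_of_eq hkpm) (f r - g r) h1 h2
          exact sub_eq_zero.mp this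
        have hcard1 : F.card = (F.image (fun f => (π₁ f, π₂ f))).card :=
          (Finset.card_image_of_injOn hinj).symm
        have hsub : F.image (fun f => (π₁ f, π₂ f)) ⊆ G₁ ×ˢ G₂ := by
          intro x hx
          obtain ⟨f, hf, rfl⟩ := Finset.mem_image.mp hx
          rw [Finset.mem_product]
          exact ⟨Finset.mem_image_of_mem _ hf, Finset.mem_image_of_mem _ hf⟩
        have hsfp : Squarefree p := hp.squarefree
        have hsfm : Squarefree m := hsf.squarefree_of_dvd hmdvd
        calc F.card = (F.image (fun f => (π₁ f, π₂ f))).card := hcard1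
          _ ≤ (G₁ ×ˢ G₂).card := Finset.card_le_card hsub
          _ = G₁.card * G₂.card := Finset.card_product _ _
          _ ≤ p ^ (n / 2) * m ^ (n / 2) :=
              Nat.mul_le_mul (ih p hplt hsfp n G₁ hG₁ort) (ih m hmlt hsfm n G₂ hG₂ort)
          _ = (p * m) ^ (n / 2) := (mul_pow p m (n / 2)).symm
          _ = k ^ (n / 2) := by rw [← hkpm]

/-- For squarefree `k ≥ 2`, a `k`-town family `F ⊆ (ℤ/kℤ)^n` (all pairwise, including self,
scalar products vanish) satisfies `|F| ≤ k^⌊n/2⌋`. -/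
theorem stmt_10 {k n : ℕ} (hk : 2 ≤ k) (hsf : Squarefree k)
    (F : Finset (Fin n → ZMod k))
    (hF : ∀ f₁ ∈ F, ∀ f₂ ∈ F, ∑ r, f₁ r * f₂ r = 0) :
    F.card ≤ k ^ (n / 2) := by
  exact main_aux k hsf n F hF
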